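/- Second modularity theorem: for each k ∈ {0,1,2,3}, if M ≥ 1, N ≥ 1 and p, q are natural numbers with 2^(M−1) ≤ p < 2^M, 2^(M−1) ≤ q < 2^M, and 2^(N−1) ≤ p ⊕ q < 2^N (where ⊕ is bitwise XOR), then N < M and ω_k(p, q) = ω_k(2^N + (p mod 2^N), 2^N + (q mod 2^N)). -/

import Mathlib

/-- The five states of the Cayley–Dickson twist tree:
corner (C), top (T), left (L), diagonal (D) and interior (I). -/
inductive TwistState : Type
  | C | T | L | D | I
deriving DecidableEq

open TwistState

/-- The interior-node sign `i_k(a,b)` for the doubling product `P_k`, `k ∈ {0,1,2,3}`. -/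
def iTwist (k : ℕ) (a b : Bool) : ℤ :=
  match k with
  | 0 => if a = false ∧ b = false then -1 else 1
  | 1 => -1
  | 2 => 1
  | _ => if a = false ∧ b = false then 1 else -1

/-- One step of the twist-tree finite-state computation: from the current
(state, sign) pair, read a doublet of bits `(a, b)` and move to the new
(state, sign) pair. -/
def twistStep (k : ℕ) : TwistState × ℤ → Bool × Bool → TwistState × ℤ
  | (C, s), (false, false) => (C, s)
  | (C, s), (false, true)  => (T, s)
  | (C, s), (true, false)  => (L, s)
  | (C, s), (true, true)   => (D, -s)
  | (T, s), (false, false) => (T, s)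
  | (T, s), (false, true)  => (T, s)
  | (T, s), (true, false)  => (I, s)
  | (T, s), (true, true)   => (I, -s)
  | (L, s), (false, false) => (L, s)
  | (L, s), (false, true)  => (I, -s)
  | (L, s), (true, false)  => (L, s)
  | (L, s), (true, true)   => (I, s)
  | (D, s), (false, false) => (D, s)
  | (D, s), (false, true)  => (I, -s)
  | (D, s), (true, false)  => (I, s)
  | (D, s), (true, true)   => (D, s)
  | (I, s), (a, b)         => (I, s * iTwist k a b)

/-- The Cayley–Dickson twist `ω_k(p,q)` for the doubling product `P_k`:
write `p` and `q` in binary with a common number of bits (padding with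
leading zeros), read the doublets of bits from most significant to least
significant, running the twist-tree automaton starting at state `C` with
sign `+1`; the result is the final sign. -/
def omegaTwist (k : ℕ) (p q : ℕ) : ℤ :=
  (((List.range (max (Nat.size p) (Nat.size q))).reverse.map
      (fun i => (p.testBit i, q.testBit i))).foldl (twistStep k) (C, 1)).2


open TwistState

lemma twistStep_D_diag (k : ℕ) (s : ℤ) (a : Bool) :
    twistStep k (D, s) (a, a) = (D, s) := by cases a <;> rfl

lemma foldl_twistStep_D (k : ℕ) (s : ℤ) (l : List (Bool × Bool))
    (h : ∀ x ∈ l, x.1 = x.2) :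
    l.foldl (twistStep k) (D, s) = (D, s) := by
  induction l with
  | nil => rfl
  | cons x t ih =>
      obtain ⟨a, b⟩ := x
      have hab : a = b := h _ List.mem_cons_self
      subst hab
      rw [List.foldl_cons, twistStep_D_diag]
      exact ih fun x hx => h _ (List.mem_cons_of_mem _ hx)

lemma testBit_of_bounds {x m : ℕ} (h1 : 2 ^ m ≤ x) (h2 : x < 2 ^ (m + 1)) :
    x.testBit m = true := by
  have hd : x / 2 ^ m = 1 := by
    apply Nat.div_eq_of_lt_le (by simpa using h1)
    calc x < 2 ^ (m+1) := h2
      _ = (1+1) * 2 ^ m := by ring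
  simp [Nat.testBit_eq_decide_div_mod_eq, hd]

lemma size_of_bounds {x m : ℕ} (h1 : 2 ^ m ≤ x) (h2 : x < 2 ^ (m + 1)) :
    Nat.size x = m + 1 :=
  le_antisymm (Nat.size_le.2 h2) (Nat.lt_size.2 h1)

/-- Second modularity theorem: for each `k ∈ {0,1,2,3}`, if `M ≥ 1`, `N ≥ 1`,
`2^(M-1) ≤ p < 2^M`, `2^(M-1) ≤ q < 2^M`, and `2^(N-1) ≤ p ⊕ q < 2^N` (with
`⊕` the bitwise XOR), then `N < M` and
`ω_k(p, q) = ω_k(2^N + (p mod 2^N), 2^N + (q mod 2^N))`. -/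
theorem omegaTwist_second_modularity :
    ∀ k ∈ ({0, 1, 2, 3} : Finset ℕ), ∀ M N p q : ℕ, 1 ≤ M → 1 ≤ N →
      2 ^ (M - 1) ≤ p → p < 2 ^ M → 2 ^ (M - 1) ≤ q → q < 2 ^ M →
      2 ^ (N - 1) ≤ p ^^^ q → p ^^^ q < 2 ^ N →
      N < M ∧
        omegaTwist k p q =
          omegaTwist k (2 ^ N + p % 2 ^ N) (2 ^ N + q % 2 ^ N) := by
  intro k _ M N p q hM hN hpl hpu hql hqu hxl hxu
  have hMs : M - 1 + 1 = M := by omega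
  have hbp : p.testBit (M - 1) = true := testBit_of_bounds hpl (by rwa [hMs])
  have hbq : q.testBit (M - 1) = true := testBit_of_bounds hql (by rwa [hMs])
  have hbx : (p ^^^ q).testBit (N - 1) = true :=
    testBit_of_bounds hxl (by rwa [show N - 1 + 1 = N by omega])
  have hNM : N < M := by
    by_contra hc
    push_neg at hc
    rw [Nat.testBit_xor] at hbx
    rcases eq_or_lt_of_le hc with h | h
    · rw [show N - 1 = M - 1 by omega, hbp, hbq] at hbx; simp at hbx
    · have h1 : p.testBit (N - 1) = false :=
        Nat.testBit_lt_two_pow (lt_of_lt_of_le hpu (Nat.pow_le_pow_right (by norm_num) (by omega)))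
      have h2 : q.testBit (N - 1) = false :=
        Nat.testBit_lt_two_pow (lt_of_lt_of_le hqu (Nat.pow_le_pow_right (by norm_num) (by omega)))
      rw [h1, h2] at hbx; simp at hbx
  refine ⟨hNM, ?_⟩
  have hagree : ∀ i, N ≤ i → p.testBit i = q.testBit i := by
    intro i hi
    have hb : (p ^^^ q).testBit i = false :=
      Nat.testBit_lt_two_pow (lt_of_lt_of_le hxu (Nat.pow_le_pow_right (by norm_num) hi))
    rw [Nat.testBit_xor] at hb
    revert hb; cases p.testBit i <;> cases q.testBit i <;> simp
  have hsp : Nat.size p = M := by rw [← hMs]; exact size_of_bounds hpl (by rwa [hMs])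
  have hsq : Nat.size q = M := by rw [← hMs]; exact size_of_bounds hql (by rwa [hMs])
  have hpm : p % 2 ^ N < 2 ^ N := Nat.mod_lt _ (Nat.pow_pos (by norm_num))
  have hqm : q % 2 ^ N < 2 ^ N := Nat.mod_lt _ (Nat.pow_pos (by norm_num))
  have hsp' : Nat.size (2 ^ N + p % 2 ^ N) = N + 1 :=
    size_of_bounds (Nat.le_add_right _ _) (by rw [pow_succ]; omega)
  have hsq' : Nat.size (2 ^ N + q % 2 ^ N) = N + 1 :=
    size_of_bounds (Nat.le_add_right _ _) (by rw [pow_succ]; omega)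
  have hbp' : (2 ^ N + p % 2 ^ N).testBit N = true := by
    rw [Nat.testBit_two_pow_add_eq, Nat.testBit_lt_two_pow hpm]; rfl
  have hbq' : (2 ^ N + q % 2 ^ N).testBit N = true := by
    rw [Nat.testBit_two_pow_add_eq, Nat.testBit_lt_two_pow hqm]; rfl
  have hlowp : ∀ i, i < N → (2 ^ N + p % 2 ^ N).testBit i = p.testBit i := by
    intro i hi
    rw [Nat.testBit_two_pow_add_gt hi, Nat.testBit_mod_two_pow]
    simp [hi]
  have hlowq : ∀ i, i < N → (2 ^ N + q % 2 ^ N).testBit i = q.testBit i := by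
    intro i hi
    rw [Nat.testBit_two_pow_add_gt hi, Nat.testBit_mod_two_pow]
    simp [hi]
  obtain ⟨d, rfl⟩ : ∃ d, M = N + d + 1 := ⟨M - N - 1, by omega⟩
  unfold omegaTwist
  rw [hsp, hsq, hsp', hsq', max_self, max_self]
  have hrange : List.range (N + d + 1) =
      List.range N ++ (List.range d).map (fun x => N + x) ++ [N + d] := by
    rw [show N + d + 1 = N + (d + 1) by ring, List.range_add, List.range_succ]
    simp [List.map_append]
  rw [hrange, List.range_succ]
  simp only [List.reverse_append, List.reverse_cons, List.reverse_nil, List.nil_append,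
    List.reverse_singleton, List.map_append, List.map_cons, List.foldl_append,
    List.foldl_cons, List.foldl_nil, List.map_map]
  have hM1 : N + d + 1 - 1 = N + d := by omega
  rw [hM1] at hbp hbq
  rw [hbp, hbq, hbp', hbq']
  show (List.foldl (twistStep k) (List.foldl (twistStep k) (D, -1) _) _).2 =
    (List.foldl (twistStep k) (D, -1) _).2
  rw [foldl_twistStep_D]
  · congr 2
    apply List.map_congr_left
    intro i hi
    have hiN : i < N := by simpa using hi
    rw [hlowp i hiN, hlowq i hiN]
  · intro x hx
    simp only [List.mem_map, List.mem_reverse, List.mem_range, Function.comp] at hx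
    obtain ⟨i, ⟨a, _, rfl⟩, rfl⟩ := hx
    exact hagree _ (Nat.le_add_right _ _)
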